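/- Let (G, <) be an ordered group, x ∈ G, and (y_i)_{i ∈ ℤ} a family of elements of G such that x⁻¹·y_i·x = y_{i+1} for all i ∈ ℤ. Suppose for some i₀ ∈ ℤ that y_{i₀} ≠ 1 and ¬(y_{i₀} ∼ y_{i₀+1}). Then either (y_i ≪ y_{i+1} for all i ∈ ℤ, and y_i ≪ x for all i ∈ ℤ), or (y_{i+1} ≪ y_i for all i ∈ ℤ, and y_i ≪ x for all i ∈ ℤ). -/

import Mathlib

def gabs {G : Type*} [Group G] [LinearOrder G] (g : G) : G := max g g⁻¹

def ArchEquiv {G : Type*} [Group G] [LinearOrder G] (g h : G) : Prop :=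
  ∃ m n : ℕ, 0 < m ∧ 0 < n ∧ gabs g < gabs h ^ m ∧ gabs h < gabs g ^ n

def ArchLT {G : Type*} [Group G] [LinearOrder G] (g h : G) : Prop :=
  ∀ n : ℕ, 0 < n → gabs g ^ n < gabs h

section Aux
variable {G : Type*} [Group G] [LinearOrder G]
variable (hl : ∀ a b c : G, a < b → c * a < c * b)
variable (hr : ∀ a b c : G, a < b → a * c < b * c)

lemma cinv' (x g : G) : (x⁻¹ * g * x)⁻¹ = x⁻¹ * g⁻¹ * x := by group

lemma cpow' (x g : G) (n : ℕ) : (x⁻¹ * g * x) ^ n = x⁻¹ * g ^ n * x := by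
  induction n with
  | zero => group
  | succ k ih => rw [pow_succ, ih, pow_succ]; group

include hl in
lemma hle_l : ∀ a b c : G, a ≤ b → c * a ≤ c * b := by
  intro a b c h
  rcases eq_or_lt_of_le h with rfl | h
  · exact le_refl _
  · exact le_of_lt (hl a b c h)

include hr in
lemma hle_r : ∀ a b c : G, a ≤ b → a * c ≤ b * c := by
  intro a b c h
  rcases eq_or_lt_of_le h with rfl | h
  · exact le_refl _
  · exact le_of_lt (hr a b c h)

include hl hr in
lemma conj_lt' (x : G) {a b : G} (h : a < b) : x⁻¹ * a * x < x⁻¹ * b * x :=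
  hr _ _ _ (hl _ _ _ h)

include hl hr in
lemma conj_le' (x : G) {a b : G} (h : a ≤ b) : x⁻¹ * a * x ≤ x⁻¹ * b * x :=
  hle_r hr _ _ _ (hle_l hl _ _ _ h)

include hl hr in
lemma gabs_conj (x g : G) : gabs (x⁻¹ * g * x) = x⁻¹ * gabs g * x := by
  unfold gabs
  rw [cinv']
  rcases le_total g g⁻¹ with h | h
  · rw [max_eq_right h, max_eq_right (conj_le' hl hr x h)]
  · rw [max_eq_left h, max_eq_left (conj_le' hl hr x h)]

include hl in
lemma one_le_gabs (g : G) : 1 ≤ gabs g := by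
  rcases le_total 1 g with h | h
  · exact le_trans h (le_max_left _ _)
  · refine le_trans ?_ (le_max_right _ _)
    have := hle_l hl g 1 g⁻¹ h
    simpa using this

include hl in
lemma one_lt_gabs {g : G} (hg : g ≠ 1) : 1 < gabs g := by
  rcases lt_trichotomy g 1 with h | h | h
  · refine lt_of_lt_of_le ?_ (le_max_right _ _)
    have := hl g 1 g⁻¹ h
    simpa using this
  · exact absurd h hg
  · exact lt_of_lt_of_le h (le_max_left _ _)

include hl in
lemma pow_lt_pow_succ' {a : G} (ha : 1 < a) (n : ℕ) : a ^ n < a ^ (n + 1) := by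
  have := hl 1 a (a ^ n) ha
  simpa [pow_succ] using this

include hl hr in
lemma archLT_conj {g h : G} (x : G) (H : ArchLT g h) : ArchLT (x⁻¹ * g * x) (x⁻¹ * h * x) := by
  intro n hn
  rw [gabs_conj hl hr, gabs_conj hl hr, cpow']
  exact conj_lt' hl hr x (H n hn)

include hl hr in
lemma archLT_conj_iff {g h : G} (x : G) :
    ArchLT (x⁻¹ * g * x) (x⁻¹ * h * x) ↔ ArchLT g h := by
  constructor
  · intro H
    have := archLT_conj hl hr x⁻¹ H
    simpa [mul_assoc] using this
  · exact archLT_conj hl hr x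

include hl hr in
lemma arch_trichotomy {g h : G} (hg : g ≠ 1) (hh : h ≠ 1) (hne : ¬ ArchEquiv g h) :
    ArchLT g h ∨ ArchLT h g := by
  by_contra hc
  push_neg at hc
  obtain ⟨h1, h2⟩ := hc
  unfold ArchLT at h1 h2
  push_neg at h1 h2
  obtain ⟨n, hn, hn2⟩ := h1
  obtain ⟨m, hm, hm2⟩ := h2
  refine hne ⟨m + 1, n + 1, Nat.succ_pos _, Nat.succ_pos _, ?_, ?_⟩
  · exact lt_of_le_of_lt hm2 (pow_lt_pow_succ' hl (one_lt_gabs hl hh) m)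
  · exact lt_of_le_of_lt hn2 (pow_lt_pow_succ' hl (one_lt_gabs hl hg) n)

include hl hr in
lemma archLT_x {g h x : G} (hx : x⁻¹ * g * x = h) (H : ArchLT g h) : ArchLT g x := by
  intro n hn
  by_contra hc
  push_neg at hc
  set a := gabs g with ha
  have hxa : x ≤ a ^ n := le_trans (le_max_left _ _) hc
  have hxa' : x⁻¹ ≤ a ^ n := le_trans (le_max_right _ _) hc
  have h1 : gabs h = x⁻¹ * a * x := by rw [← hx, gabs_conj hl hr]
  have h2 : x⁻¹ * a * x ≤ a ^ n * a * a ^ n := by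
    calc x⁻¹ * a * x ≤ x⁻¹ * a * a ^ n := hle_l hl _ _ _ hxa
    _ = x⁻¹ * (a * a ^ n) := by rw [mul_assoc]
    _ ≤ a ^ n * (a * a ^ n) := hle_r hr _ _ _ hxa'
    _ = a ^ n * a * a ^ n := by rw [mul_assoc]
  have h3 : a ^ n * a * a ^ n = a ^ (2 * n + 1) := by
    rw [← pow_succ, ← pow_add]
    congr 1
    omega
  have h4 : a ^ (2 * n + 1) ≤ a ^ (2 * n + 2) := by
    have := hle_l hl 1 a (a ^ (2 * n + 1)) (one_le_gabs hl g)
    simpa [pow_succ] using this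
  have h5 := H (2 * n + 2) (by omega)
  rw [h1] at h5
  exact lt_irrefl _ (lt_of_lt_of_le h5 (le_trans h2 (h3 ▸ h4)))

lemma int_all {P : ℤ → Prop} (hstep : ∀ i, P i ↔ P (i + 1)) (i₀ : ℤ) (h0 : P i₀) :
    ∀ i, P i := by
  have key : ∀ n : ℤ, P (i₀ + n) := by
    intro n
    induction n using Int.induction_on with
    | zero => simpa using h0
    | succ k ih =>
        have h := (hstep (i₀ + k)).mp ih
        rw [show i₀ + ((k : ℤ) + 1) = i₀ + k + 1 by ring]
        exact h
    | pred k ih =>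
        refine (hstep (i₀ + (-(k : ℤ) - 1))).mpr ?_
        rw [show i₀ + (-(k : ℤ) - 1) + 1 = i₀ + -(k : ℤ) by ring]
        exact ih
  intro i
  have := key (i - i₀)
  simpa using this

lemma gabs_inv (x : G) : gabs x⁻¹ = gabs x := by
  unfold gabs; rw [inv_inv, max_comm]

end Aux

/-- In an ordered group, if `x⁻¹ yᵢ x = yᵢ₊₁` for all `i ∈ ℤ`, and for some `i₀` we have
`y_{i₀} ≠ 1` and `¬(y_{i₀} ∼ y_{i₀+1})`, then either
`⋯ ≪ y_{i-1} ≪ y_i ≪ y_{i+1} ≪ ⋯ ≪ x` or `⋯ ≪ y_{i+1} ≪ y_i ≪ y_{i-1} ≪ ⋯ ≪ x`. -/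
theorem archLT_chain_of_conj {G : Type*} [Group G] [LinearOrder G]
    (hl : ∀ a b c : G, a < b → c * a < c * b)
    (hr : ∀ a b c : G, a < b → a * c < b * c)
    (x : G) (y : ℤ → G) (hconj : ∀ i : ℤ, x⁻¹ * y i * x = y (i + 1))
    (i₀ : ℤ) (hy : y i₀ ≠ 1) (hne : ¬ ArchEquiv (y i₀) (y (i₀ + 1))) :
    ((∀ i : ℤ, ArchLT (y i) (y (i + 1))) ∧ ∀ i : ℤ, ArchLT (y i) x) ∨
    ((∀ i : ℤ, ArchLT (y (i + 1)) (y i)) ∧ ∀ i : ℤ, ArchLT (y i) x) := by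
  have hy1 : y (i₀ + 1) ≠ 1 := by
    rw [← hconj i₀]
    intro h
    apply hy
    have : y i₀ = x * 1 * x⁻¹ := by rw [← h]; group
    simpa using this
  have stepF : ∀ i, ArchLT (y i) (y (i + 1)) ↔ ArchLT (y (i + 1)) (y (i + 1 + 1)) := by
    intro i
    rw [← hconj i, ← hconj (i + 1), ← hconj i]
    exact (archLT_conj_iff hl hr x).symm
  have stepB : ∀ i, ArchLT (y (i + 1)) (y i) ↔ ArchLT (y (i + 1 + 1)) (y (i + 1)) := by
    intro i
    rw [← hconj i, ← hconj (i + 1), ← hconj i]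
    exact (archLT_conj_iff hl hr x).symm
  rcases arch_trichotomy hl hr hy hy1 hne with H | H
  · left
    have hall : ∀ i, ArchLT (y i) (y (i + 1)) := int_all stepF i₀ H
    exact ⟨hall, fun i => archLT_x hl hr (hconj i) (hall i)⟩
  · right
    have hall : ∀ i, ArchLT (y (i + 1)) (y i) := int_all stepB i₀ H
    refine ⟨hall, fun i => ?_⟩
    have hc' : (x⁻¹)⁻¹ * y ((i - 1) + 1) * x⁻¹ = y (i - 1) := by
      rw [← hconj (i - 1)]; group
    have h3 : ArchLT (y ((i - 1) + 1)) x := by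
      intro n hn
      have := archLT_x hl hr hc' (hall (i - 1)) n hn
      rwa [gabs_inv] at this
    simpa using h3
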